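/- The integral over all real t of Φ(−t)·Φ(t) dt equals 1/√π, where Φ is the standard normal CDF. -/

import Mathlib

open MeasureTheory Real Filter

noncomputable def phi (t : ℝ) : ℝ := Real.exp (-t^2/2) / Real.sqrt (2*Real.pi)

noncomputable def Phi (x : ℝ) : ℝ := ∫ s in Set.Iic x, phi s

section Aux
open Set

lemma phi_eq (s : ℝ) : phi s = Real.exp (-(1/2) * s^2) / Real.sqrt (2*Real.pi) := by
  unfold phi; ring_nf

lemma phi_nonneg (s : ℝ) : 0 ≤ phi s :=
  div_nonneg (Real.exp_pos _).le (Real.sqrt_nonneg _)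

lemma phi_even (s : ℝ) : phi (-s) = phi s := by unfold phi; ring_nf

lemma continuous_phi : Continuous phi := by
  unfold phi; fun_prop

lemma integrable_phi : Integrable phi := by
  have h := (integrable_exp_neg_mul_sq (b := 1/2) (by norm_num)).div_const (Real.sqrt (2*Real.pi))
  refine h.congr (Filter.Eventually.of_forall fun s => ?_)
  rw [phi_eq]

lemma integrable_mul_phi : Integrable (fun s => s * phi s) := by
  have h := (integrable_rpow_mul_exp_neg_mul_sq (b := 1/2) (by norm_num) (s := 1)
    (by norm_num)).div_const (Real.sqrt (2*Real.pi))
  refine h.congr (Filter.Eventually.of_forall fun s => ?_)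
  simp only [phi_eq, Real.rpow_one]; ring

lemma integral_phi : ∫ s, phi s = 1 := by
  have h : ∫ s : ℝ, Real.exp (-(1/2) * s^2) = Real.sqrt (Real.pi / (1/2)) :=
    integral_gaussian (1/2)
  have : ∫ s, phi s = (∫ s : ℝ, Real.exp (-(1/2) * s^2)) / Real.sqrt (2*Real.pi) := by
    rw [← integral_div]; exact integral_congr_ae (.of_forall fun s => by rw [phi_eq])
  rw [this, h]
  rw [show Real.pi / (1/2) = 2 * Real.pi by ring]
  rw [div_self (by positivity)]

lemma Phi_nonneg (x : ℝ) : 0 ≤ Phi x :=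
  setIntegral_nonneg measurableSet_Iic fun s _ => phi_nonneg s

lemma Phi_le_one (x : ℝ) : Phi x ≤ 1 := by
  rw [← integral_phi]
  exact setIntegral_le_integral integrable_phi (.of_forall phi_nonneg)

lemma Phi_eq (x : ℝ) : Phi x = Phi 0 + ∫ s in (0:ℝ)..x, phi s := by
  have h := intervalIntegral.integral_Iic_sub_Iic (μ := volume) (f := phi) (a := 0) (b := x)
    integrable_phi.integrableOn integrable_phi.integrableOn
  unfold Phi; linarith [h]

lemma hasDerivAt_Phi (x : ℝ) : HasDerivAt Phi (phi x) x := by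
  have h : HasDerivAt (fun y => Phi 0 + ∫ s in (0:ℝ)..y, phi s) (phi x) x := by
    refine HasDerivAt.const_add _ ?_
    exact intervalIntegral.integral_hasDerivAt_right
      (integrable_phi.intervalIntegrable)
      (continuous_phi.stronglyMeasurable.stronglyMeasurableAtFilter)
      continuous_phi.continuousAt
  exact h.congr_of_eventuallyEq (Filter.Eventually.of_forall fun y => (Phi_eq y))

lemma Phi_Ioi (x : ℝ) : ∫ s in Set.Ioi x, phi s = Phi (-x) := by
  have h := integral_comp_neg_Iic (c := -x) phi
  simp only [neg_neg] at h
  unfold Phi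
  rw [← h]
  exact integral_congr_ae (.of_forall fun s => (phi_even s))

lemma Phi_neg (x : ℝ) : Phi (-x) = 1 - Phi x := by
  have h := intervalIntegral.integral_Iic_add_Ioi (μ := volume) (b := x)
    integrable_phi.integrableOn integrable_phi.integrableOn
  rw [integral_phi] at h
  rw [← Phi_Ioi]; unfold Phi at *; linarith

lemma hasDerivAt_phi (x : ℝ) : HasDerivAt phi (-x * phi x) x := by
  have h : HasDerivAt (fun t : ℝ => Real.exp (-t^2/2) / Real.sqrt (2*Real.pi))
      ((Real.exp (-x^2/2) * (-(2*x)/2)) / Real.sqrt (2*Real.pi)) x := by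
    have h1 : HasDerivAt (fun t : ℝ => -t^2/2) (-(2*x)/2) x := by
      have := ((hasDerivAt_pow 2 x).neg).div_const 2
      simpa using this
    exact ((h1.exp)).div_const _
  have : (Real.exp (-x^2/2) * (-(2*x)/2)) / Real.sqrt (2*Real.pi) = -x * phi x := by
    unfold phi; ring
  rw [this] at h
  exact h

lemma tendsto_phi_atTop : Tendsto phi atTop (nhds 0) := by
  have h1 : Tendsto (fun t : ℝ => -t^2/2) atTop atBot := by
    apply Tendsto.atBot_div_const (by norm_num)
    exact tendsto_neg_atBot_iff.mpr (tendsto_pow_atTop (by norm_num))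
  have := (Real.tendsto_exp_atBot).comp h1
  have h2 := this.div_const (Real.sqrt (2*Real.pi))
  rw [zero_div] at h2
  exact h2.congr fun t => by simp [phi, Function.comp]

lemma tendsto_phi_atBot : Tendsto phi atBot (nhds 0) := by
  have h := tendsto_phi_atTop.comp tendsto_neg_atBot_atTop
  refine h.congr fun t => ?_
  simp [Function.comp, phi_even]

lemma tendsto_Phi_atTop : Tendsto Phi atTop (nhds 1) := by
  have h := intervalIntegral_tendsto_integral_Ioi (μ := volume) 0
    integrable_phi.integrableOn (tendsto_id (α := ℝ))
  have h2 : Tendsto (fun x : ℝ => Phi 0 + ∫ s in (0:ℝ)..x, phi s) atTop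
      (nhds (Phi 0 + ∫ s in Set.Ioi (0:ℝ), phi s)) := (tendsto_const_nhds).add h
  have h3 : Phi 0 + ∫ s in Set.Ioi (0:ℝ), phi s = 1 := by
    have := intervalIntegral.integral_Iic_add_Ioi (μ := volume) (b := (0:ℝ))
      integrable_phi.integrableOn integrable_phi.integrableOn
    rw [integral_phi] at this; unfold Phi; linarith
  rw [h3] at h2
  exact h2.congr fun x => (Phi_eq x).symm

lemma tendsto_Phi_atBot : Tendsto Phi atBot (nhds 0) := by
  have h := (tendsto_Phi_atTop.comp tendsto_neg_atBot_atTop).neg.const_add 1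
  have : (1:ℝ) + -1 = 0 := by norm_num
  rw [this] at h
  refine h.congr fun t => ?_
  simp only [Function.comp]
  have := Phi_neg (-t)
  rw [neg_neg] at this
  rw [this]; ring

lemma integral_Ioi_mul_phi (t : ℝ) : ∫ s in Set.Ioi t, s * phi s = phi t := by
  have h := integral_Ioi_of_hasDerivAt_of_tendsto' (f := fun s => -phi s)
    (f' := fun s => s * phi s) (a := t) (m := 0)
    (fun x _ => by have := (hasDerivAt_phi x).neg; rw [neg_mul, neg_neg] at this; exact this)
    integrable_mul_phi.integrableOn
    (by simpa using tendsto_phi_atTop.neg)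
  simpa using h

lemma tail_bound {t : ℝ} (ht : 1 ≤ t) : t * Phi (-t) ≤ phi t := by
  have ht0 : 0 < t := lt_of_lt_of_le one_pos ht
  rw [← Phi_Ioi, ← integral_const_mul]
  rw [← integral_Ioi_mul_phi t]
  apply setIntegral_mono_on
  · exact (integrable_phi.const_mul t).integrableOn
  · exact integrable_mul_phi.integrableOn
  · exact measurableSet_Ioi
  · intro s hs
    exact mul_le_mul_of_nonneg_right (le_of_lt hs) (phi_nonneg s)

lemma tendsto_term1_atTop : Tendsto (fun t => t * (Phi t * Phi (-t))) atTop (nhds 0) := by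
  apply squeeze_zero' (g := phi)
  · filter_upwards [eventually_ge_atTop (1:ℝ)] with t ht
    have ht0 : (0:ℝ) ≤ t := le_trans zero_le_one ht
    exact mul_nonneg ht0 (mul_nonneg (Phi_nonneg _) (Phi_nonneg _))
  · filter_upwards [eventually_ge_atTop (1:ℝ)] with t ht
    have ht0 : (0:ℝ) ≤ t := le_trans zero_le_one ht
    calc t * (Phi t * Phi (-t)) = (t * Phi (-t)) * Phi t := by ring
    _ ≤ (t * Phi (-t)) * 1 :=
        mul_le_mul_of_nonneg_left (Phi_le_one t) (mul_nonneg ht0 (Phi_nonneg _))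
    _ = t * Phi (-t) := by ring
    _ ≤ phi t := tail_bound ht
  · exact tendsto_phi_atTop

lemma tendsto_term1_atBot : Tendsto (fun t => t * (Phi t * Phi (-t))) atBot (nhds 0) := by
  have h := (tendsto_term1_atTop.comp tendsto_neg_atBot_atTop).neg
  rw [neg_zero] at h
  refine h.congr fun t => ?_
  simp only [Function.comp]
  rw [neg_neg]; ring

lemma phi_sqrt2 (x : ℝ) :
    phi (Real.sqrt 2 * x) * Real.sqrt 2 / Real.sqrt Real.pi = 2 * phi x ^ 2 := by
  unfold phi
  have h2 : (Real.sqrt 2 * x)^2 = 2 * x^2 := by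
    rw [mul_pow, Real.sq_sqrt (by norm_num : (0:ℝ) ≤ 2)]
  rw [h2]
  have hs : Real.sqrt (2*Real.pi) = Real.sqrt 2 * Real.sqrt Real.pi :=
    Real.sqrt_mul (by norm_num) _
  have hp : Real.sqrt Real.pi * Real.sqrt Real.pi = Real.pi :=
    Real.mul_self_sqrt Real.pi_pos.le
  have h22 : Real.sqrt 2 * Real.sqrt 2 = 2 := Real.mul_self_sqrt (by norm_num)
  have he : Real.exp (-x^2/2) ^ 2 = Real.exp (-(2*x^2)/2) := by
    rw [sq, ← Real.exp_add]; ring_nf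
  rw [hs, ← he]
  have hπ : Real.pi ≠ 0 := Real.pi_ne_zero
  have hsπ : Real.sqrt Real.pi ≠ 0 := by positivity
  have hs2 : Real.sqrt 2 ≠ 0 := by positivity
  have key : (Real.sqrt 2 * Real.sqrt Real.pi)^2 = 2 * Real.pi := by
    rw [mul_pow, sq, sq, h22, hp]
  field_simp
  rw [sq, h22]

noncomputable def F (t : ℝ) : ℝ :=
  t * (Phi t * Phi (-t)) + phi t * (1 - 2 * Phi t) + Phi (Real.sqrt 2 * t) / Real.sqrt Real.pi

lemma hasDerivAt_F (x : ℝ) : HasDerivAt F (Phi (-x) * Phi x) x := by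
  have hPhiNeg : HasDerivAt (fun t => Phi (-t)) (phi (-x) * (-1)) x :=
    (hasDerivAt_Phi (-x)).comp x (hasDerivAt_neg x)
  have hA : HasDerivAt (fun t => t * (Phi t * Phi (-t)))
      (1 * (Phi x * Phi (-x)) + x * (phi x * Phi (-x) + Phi x * (phi (-x) * (-1)))) x :=
    (hasDerivAt_id x).mul ((hasDerivAt_Phi x).mul hPhiNeg)
  have hB : HasDerivAt (fun t => phi t * (1 - 2 * Phi t))
      ((-x * phi x) * (1 - 2 * Phi x) + phi x * (0 - 2 * phi x)) x :=
    (hasDerivAt_phi x).mul ((hasDerivAt_const x (1:ℝ)).sub ((hasDerivAt_Phi x).const_mul 2))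
  have hC : HasDerivAt (fun t => Phi (Real.sqrt 2 * t) / Real.sqrt Real.pi)
      (phi (Real.sqrt 2 * x) * Real.sqrt 2 / Real.sqrt Real.pi) x := by
    have : HasDerivAt (fun t : ℝ => Real.sqrt 2 * t) (Real.sqrt 2) x := by
      simpa using (hasDerivAt_id x).const_mul (Real.sqrt 2)
    exact ((hasDerivAt_Phi (Real.sqrt 2 * x)).comp x this).div_const _
  have h := (hA.add hB).add hC
  have heq : (1 * (Phi x * Phi (-x)) + x * (phi x * Phi (-x) + Phi x * (phi (-x) * (-1))))
      + ((-x * phi x) * (1 - 2 * Phi x) + phi x * (0 - 2 * phi x))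
      + phi (Real.sqrt 2 * x) * Real.sqrt 2 / Real.sqrt Real.pi
      = Phi (-x) * Phi x := by
    rw [phi_sqrt2, phi_even, Phi_neg]; ring
  rw [heq] at h
  exact h

lemma tendsto_F_atTop : Tendsto F atTop (nhds (1 / Real.sqrt Real.pi)) := by
  have h2 : Tendsto (fun t => phi t * (1 - 2 * Phi t)) atTop (nhds (0 * (1 - 2 * 1))) :=
    tendsto_phi_atTop.mul ((tendsto_const_nhds).sub (tendsto_Phi_atTop.const_mul 2))
  have h3 : Tendsto (fun t => Phi (Real.sqrt 2 * t) / Real.sqrt Real.pi) atTop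
      (nhds (1 / Real.sqrt Real.pi)) := by
    have hm : Tendsto (fun t : ℝ => Real.sqrt 2 * t) atTop atTop :=
      Tendsto.const_mul_atTop (by positivity) tendsto_id
    exact (tendsto_Phi_atTop.comp hm).div_const _
  have h := (tendsto_term1_atTop.add h2).add h3
  norm_num at h
  rw [one_div]
  exact h

lemma tendsto_F_atBot : Tendsto F atBot (nhds 0) := by
  have h2 : Tendsto (fun t => phi t * (1 - 2 * Phi t)) atBot (nhds (0 * (1 - 2 * 0))) :=
    tendsto_phi_atBot.mul ((tendsto_const_nhds).sub (tendsto_Phi_atBot.const_mul 2))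
  have h3 : Tendsto (fun t => Phi (Real.sqrt 2 * t) / Real.sqrt Real.pi) atBot
      (nhds (0 / Real.sqrt Real.pi)) := by
    have hm : Tendsto (fun t : ℝ => Real.sqrt 2 * t) atBot atBot :=
      Tendsto.const_mul_atBot (by positivity) tendsto_id
    exact (tendsto_Phi_atBot.comp hm).div_const _
  have h := (tendsto_term1_atBot.add h2).add h3
  norm_num at h
  exact h

lemma intOn_Ioi : IntegrableOn (fun t => Phi (-t) * Phi t) (Set.Ioi (0:ℝ)) :=
  integrableOn_Ioi_deriv_of_nonneg' (fun x _ => hasDerivAt_F x)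
    (fun x _ => mul_nonneg (Phi_nonneg _) (Phi_nonneg _)) tendsto_F_atTop

lemma integrable_f : Integrable (fun t => Phi (-t) * Phi t) := by
  rw [← integrableOn_univ, ← Set.Iic_union_Ioi (a := (0:ℝ)), integrableOn_union]
  refine ⟨?_, intOn_Ioi⟩
  rw [← (Measure.measurePreserving_neg (volume : Measure ℝ)).integrableOn_comp_preimage
      (Homeomorph.neg ℝ).measurableEmbedding]
  simp only [Function.comp_def, neg_neg, neg_preimage, neg_Iic, neg_zero]
  rw [integrableOn_Ici_iff_integrableOn_Ioi]
  exact intOn_Ioi.congr_fun (fun x _ => mul_comm _ _) measurableSet_Ioi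

end Aux

theorem stmt1 : ∫ t : ℝ, Phi (-t) * Phi t = 1 / Real.sqrt Real.pi := by
  have h := integral_of_hasDerivAt_of_tendsto hasDerivAt_F integrable_f
    tendsto_F_atBot tendsto_F_atTop
  simpa using h
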